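/- Let X and Y be real Hilbert spaces, A, V : X → Y bounded linear operators, G : X → ℝ a γ_G-strongly convex function and F* : Y → ℝ a γ_{F*}-strongly convex function. Let constants satisfy 0 < μ̃_G < μ_G < γ_G, 0 < μ̃_{F*} < μ_{F*} < γ_{F*}, and μ̃_G·μ̃_{F*} ≥ (1/4)·‖A − V‖². Set c = min{(μ_G − μ̃_G)/(μ_G·μ̃_G), (μ_{F*} − μ̃_{F*})/(μ_{F*}·μ̃_{F*})}. Let τ satisfy 0 < τ < min{1/‖A − V‖, c} and let θ satisfy 0 < θ < 2 − 2τ/c. Suppose sequences (x^k), (v^k), (p^k) in X and (y^k), (w^k), (q^k) in Y follow the primal-dual Douglas–Rachford iteration with mismatched adjoint with step size τ and relaxation parameter θ, and suppose x̂ ∈ X, ŷ ∈ Y are such that −V*(ŷ) is a subgradient of G at x̂ and A(x̂) is a subgradient of F* at ŷ. Then (x^k, y^k) converges weakly to (x̂, ŷ), i.e., for every a ∈ X and b ∈ Y, ⟪x^k, a⟫ + ⟪y^k, b⟫ → ⟪x̂, a⟫ + ⟪ŷ, b⟫ as k → ∞. -/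

import Mathlib

open scoped RealInnerProductSpace

/-- `g` is a subgradient of `f` at `x`. -/
def IsSubgradientAt {E : Type*} [NormedAddCommGroup E] [InnerProductSpace ℝ E]
    (f : E → ℝ) (g x : E) : Prop :=
  ∀ z, f x + ⟪g, z - x⟫ ≤ f z

/-- `f` is `γ`-strongly convex: `x ↦ f x − (γ/2)‖x‖²` is convex. -/
def IsStronglyConvex {E : Type*} [NormedAddCommGroup E] [InnerProductSpace ℝ E]
    (γ : ℝ) (f : E → ℝ) : Prop :=
  0 < γ ∧ ConvexOn ℝ Set.univ (fun x => f x - γ / 2 * ‖x‖ ^ 2)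

lemma aux_young {E : Type*} [NormedAddCommGroup E] [InnerProductSpace ℝ E]
    (a b : E) (s t : ℝ) (hs : 0 < s) (hst : 1 ≤ s * t) :
    ‖a + b‖ ^ 2 ≤ (1 + s) * ‖a‖ ^ 2 + (1 + t) * ‖b‖ ^ 2 := by
  have h := norm_add_sq_real a b
  have h2 : ⟪a, b⟫ ≤ ‖a‖ * ‖b‖ := real_inner_le_norm a b
  nlinarith [sq_nonneg (s * ‖a‖ - ‖b‖), norm_nonneg a, norm_nonneg b,
    mul_nonneg (norm_nonneg a) (norm_nonneg b), hs, sq_nonneg ‖a‖, sq_nonneg ‖b‖]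

lemma strong_subgrad {E : Type*} [NormedAddCommGroup E] [InnerProductSpace ℝ E]
    {γ : ℝ} {f : E → ℝ} (hf : IsStronglyConvex γ f) {g x : E}
    (hg : IsSubgradientAt f g x) (z : E) :
    f x + ⟪g, z - x⟫ + γ / 2 * ‖z - x‖ ^ 2 ≤ f z := by
  obtain ⟨hγ, hconv⟩ := hf
  have key : ∀ t : ℝ, 0 < t → t ≤ 1 →
      ⟪g, z - x⟫ + γ / 2 * (1 - t) * ‖z - x‖ ^ 2 ≤ f z - f x := by
    intro t ht0 ht1
    have hsub := hg (x + t • (z - x))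
    have hiz : ⟪g, x + t • (z - x) - x⟫ = t * ⟪g, z - x⟫ := by
      rw [add_sub_cancel_left, real_inner_smul_right]
    rw [hiz] at hsub
    have hcv := hconv.2 (Set.mem_univ x) (Set.mem_univ z)
      (by linarith : (0:ℝ) ≤ 1 - t) ht0.le (by ring)
    have hpt : (1 - t) • x + t • z = x + t • (z - x) := by module
    rw [hpt] at hcv
    simp only [smul_eq_mul] at hcv
    have hxz : ‖z‖ ^ 2 = ‖x‖ ^ 2 + 2 * ⟪x, z - x⟫ + ‖z - x‖ ^ 2 := by
      have h := norm_add_sq_real x (z - x)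
      simpa using h
    have hsm : ‖t • (z - x)‖ ^ 2 = t ^ 2 * ‖z - x‖ ^ 2 := by
      rw [norm_smul, Real.norm_eq_abs, mul_pow, sq_abs]
    have hm : ‖x + t • (z - x)‖ ^ 2
        = ‖x‖ ^ 2 + 2 * (t * ⟪x, z - x⟫) + t ^ 2 * ‖z - x‖ ^ 2 := by
      rw [norm_add_sq_real, real_inner_smul_right, hsm]
    have hid : (1 - t) * ‖x‖ ^ 2 + t * ‖z‖ ^ 2 - ‖x + t • (z - x)‖ ^ 2
        = t * (1 - t) * ‖z - x‖ ^ 2 := by rw [hxz, hm]; ring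
    have hidγ : γ / 2 * ((1 - t) * ‖x‖ ^ 2 + t * ‖z‖ ^ 2 - ‖x + t • (z - x)‖ ^ 2)
        = γ / 2 * (t * (1 - t) * ‖z - x‖ ^ 2) := by rw [hid]
    have hcv' : f (x + t • (z - x)) ≤ (1 - t) * f x + t * f z
        - γ / 2 * (t * (1 - t) * ‖z - x‖ ^ 2) := by linarith [hcv, hidγ]
    have h5 : t * (⟪g, z - x⟫ + γ / 2 * (1 - t) * ‖z - x‖ ^ 2) ≤ t * (f z - f x) := by
      nlinarith [hsub, hcv']
    exact le_of_mul_le_mul_left h5 ht0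
  have ht : Filter.Tendsto (fun n : ℕ => 1 / ((n : ℝ) + 1)) Filter.atTop (nhds 0) :=
    tendsto_one_div_add_atTop_nhds_zero_nat
  have hL : Filter.Tendsto
      (fun n : ℕ => ⟪g, z - x⟫ + γ / 2 * (1 - 1 / ((n : ℝ) + 1)) * ‖z - x‖ ^ 2)
      Filter.atTop (nhds (⟪g, z - x⟫ + γ / 2 * (1 - 0) * ‖z - x‖ ^ 2)) := by
    exact Filter.Tendsto.const_add _
      ((((tendsto_const_nhds.sub ht).const_mul _).mul_const _))
  have hle : ⟪g, z - x⟫ + γ / 2 * (1 - 0) * ‖z - x‖ ^ 2 ≤ f z - f x := by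
    refine le_of_tendsto hL (Filter.Eventually.of_forall fun n => ?_)
    refine key _ (by positivity) ?_
    rw [div_le_one (by positivity)]
    linarith [Nat.cast_nonneg (α := ℝ) n]
  linarith [hle]

lemma strong_mono {E : Type*} [NormedAddCommGroup E] [InnerProductSpace ℝ E]
    {γ : ℝ} {f : E → ℝ} (hf : IsStronglyConvex γ f) {g₁ x₁ g₂ x₂ : E}
    (h₁ : IsSubgradientAt f g₁ x₁) (h₂ : IsSubgradientAt f g₂ x₂) :
    γ * ‖x₁ - x₂‖ ^ 2 ≤ ⟪g₁ - g₂, x₁ - x₂⟫ := by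
  have a1 := strong_subgrad hf h₁ x₂
  have a2 := strong_subgrad hf h₂ x₁
  have hs : ‖x₂ - x₁‖ = ‖x₁ - x₂‖ := norm_sub_rev _ _
  have hi : ⟪g₁, x₂ - x₁⟫ = -⟪g₁, x₁ - x₂⟫ := by
    rw [← neg_sub x₁ x₂, inner_neg_right]
  have hsub : ⟪g₁ - g₂, x₁ - x₂⟫ = ⟪g₁, x₁ - x₂⟫ - ⟪g₂, x₁ - x₂⟫ := inner_sub_left _ _ _
  rw [hs, hi] at a1
  linarith [a1, a2]
lemma mismatch_bound (N a b u v : ℝ) (hN : 0 ≤ N) (ha : 0 < a) (hb : 0 < b)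
    (h : 1 / 4 * N ^ 2 ≤ a * b) (hu : 0 ≤ u) (hv : 0 ≤ v) :
    N * (u * v) ≤ a * u ^ 2 + b * v ^ 2 := by
  have hs1 : Real.sqrt a ^ 2 = a := Real.sq_sqrt ha.le
  have hs2 : Real.sqrt b ^ 2 = b := Real.sq_sqrt hb.le
  have hs1n : 0 ≤ Real.sqrt a := Real.sqrt_nonneg a
  have hs2n : 0 ≤ Real.sqrt b := Real.sqrt_nonneg b
  have hNle : N ≤ 2 * Real.sqrt a * Real.sqrt b := by
    nlinarith [mul_nonneg hs1n hs2n]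
  have h3 : N * (u * v) ≤ 2 * Real.sqrt a * Real.sqrt b * (u * v) :=
    mul_le_mul_of_nonneg_right hNle (mul_nonneg hu hv)
  nlinarith [sq_nonneg (Real.sqrt a * u - Real.sqrt b * v)]

set_option maxHeartbeats 1000000 in
/-- Weak convergence of the primal-dual Douglas–Rachford method with mismatched adjoint
to a fixed point, for admissible step size `τ` and relaxation parameter `θ`. -/
theorem pddr_mismatch_weak_convergence
    {X Y : Type*} [NormedAddCommGroup X] [InnerProductSpace ℝ X] [CompleteSpace X]
    [NormedAddCommGroup Y] [InnerProductSpace ℝ Y] [CompleteSpace Y]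
    (A V : X →L[ℝ] Y) (G : X → ℝ) (Fs : Y → ℝ) (γG γFs : ℝ)
    (hG : IsStronglyConvex γG G) (hFs : IsStronglyConvex γFs Fs)
    (μG μFs μtG μtFs : ℝ)
    (hμtG : 0 < μtG) (hμG : μtG < μG) (hμGγ : μG < γG)
    (hμtFs : 0 < μtFs) (hμFs : μtFs < μFs) (hμFsγ : μFs < γFs)
    (hmm : (1 / 4) * ‖A - V‖ ^ 2 ≤ μtG * μtFs)
    (c : ℝ) (hc : c = min ((μG - μtG) / (μG * μtG)) ((μFs - μtFs) / (μFs * μtFs)))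
    (τ θ : ℝ) (hτ0 : 0 < τ) (hτ : τ < min (1 / ‖A - V‖) c)
    (hθ0 : 0 < θ) (hθ : θ < 2 - 2 * τ / c)
    (PG : X → X) (PF : Y → Y)
    (hPG : ∀ p z, G (PG p) + ⟪(1 / τ) • (p - PG p), z - PG p⟫ ≤ G z)
    (hPF : ∀ q z, Fs (PF q) + ⟪(1 / τ) • (q - PF q), z - PF q⟫ ≤ Fs z)
    (x v p : ℕ → X) (y w q : ℕ → Y)
    (hx : ∀ k, x (k + 1) = PG (p k))
    (hy : ∀ k, y (k + 1) = PF (q k))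
    (hv : ∀ k, v (k + 1) + τ • (ContinuousLinearMap.adjoint V) (w (k + 1)) =
      (2 : ℝ) • x (k + 1) - p k)
    (hw : ∀ k, w (k + 1) - τ • A (v (k + 1)) = (2 : ℝ) • y (k + 1) - q k)
    (hp : ∀ k, p (k + 1) = p k + θ • (v (k + 1) - x (k + 1)))
    (hq : ∀ k, q (k + 1) = q k + θ • (w (k + 1) - y (k + 1)))
    (xh : X) (yh : Y)
    (hxh : IsSubgradientAt G (-(ContinuousLinearMap.adjoint V) yh) xh)
    (hyh : IsSubgradientAt Fs (A xh) yh) :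
    ∀ (a : X) (b : Y),
      Filter.Tendsto (fun k => ⟪x k, a⟫ + ⟪y k, b⟫) Filter.atTop
        (nhds (⟪xh, a⟫ + ⟪yh, b⟫)) := by
  intro a b
  have hτne : τ ≠ 0 := hτ0.ne'
  set Vs := ContinuousLinearMap.adjoint V with hVsdef
  set ph : X := xh - τ • Vs yh with hph
  set qh : Y := yh + τ • A xh with hqh
  have hτc : τ < c := lt_of_lt_of_le hτ (min_le_right _ _)
  have hc0 : 0 < c := hτ0.trans hτc
  have hμG0 : 0 < μG := hμtG.trans hμG
  have hμFs0 : 0 < μFs := hμtFs.trans hμFs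
  have hGsub : μG - μtG ≠ 0 := sub_ne_zero.mpr hμG.ne'
  have hFsub : μFs - μtFs ≠ 0 := sub_ne_zero.mpr hμFs.ne'
  set KG : ℝ := μG * μtG / (μG - μtG) with hKG
  set KF : ℝ := μFs * μtFs / (μFs - μtFs) with hKF
  have hKGc : τ * KG ≤ τ / c := by
    have h1 : KG = 1 / ((μG - μtG) / (μG * μtG)) := by rw [hKG, one_div_div]
    have h2 : c ≤ (μG - μtG) / (μG * μtG) := hc ▸ min_le_left _ _
    rw [h1, mul_one_div]
    exact div_le_div_of_nonneg_left hτ0.le hc0 h2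
  have hKFc : τ * KF ≤ τ / c := by
    have h1 : KF = 1 / ((μFs - μtFs) / (μFs * μtFs)) := by rw [hKF, one_div_div]
    have h2 : c ≤ (μFs - μtFs) / (μFs * μtFs) := hc ▸ min_le_right _ _
    rw [h1, mul_one_div]
    exact div_le_div_of_nonneg_left hτ0.le hc0 h2
  have hB1 : θ + 2 * (τ * KG) ≤ 2 := by
    have h3 : 2 * τ / c = 2 * (τ / c) := by ring
    rw [h3] at hθ; linarith
  have hB2 : θ + 2 * (τ * KF) ≤ 2 := by
    have h3 : 2 * τ / c = 2 * (τ / c) := by ring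
    rw [h3] at hθ; linarith
  set ε : ℝ := min (γG - μG) (γFs - μFs) with hε
  have hε0 : 0 < ε := lt_min (by linarith) (by linarith)
  set κ : ℝ := 2 * θ * τ * ε with hκ
  have hκ0 : 0 < κ := by positivity
  -- key one-step estimate
  have key : ∀ k, ‖p (k+1) - ph‖ ^ 2 + ‖q (k+1) - qh‖ ^ 2
      + κ * (‖x (k+1) - xh‖ ^ 2 + ‖y (k+1) - yh‖ ^ 2)
      ≤ ‖p k - ph‖ ^ 2 + ‖q k - qh‖ ^ 2 := by
    intro k
    set dx := x (k+1) - xh with hdx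
    set dy := y (k+1) - yh with hdy
    set dv := v (k+1) - xh with hdv
    set dw := w (k+1) - yh with hdw
    set P := p k - ph with hP
    set Q := q k - qh with hQ
    -- subgradients at the iterates
    have sgx : IsSubgradientAt G ((1 / τ) • (p k - x (k+1))) (x (k+1)) := by
      intro z; rw [hx k]; exact hPG (p k) z
    have sgy : IsSubgradientAt Fs ((1 / τ) • (q k - y (k+1))) (y (k+1)) := by
      intro z; rw [hy k]; exact hPF (q k) z
    have m1 := strong_mono hG sgx hxh
    have m2 := strong_mono hFs sgy hyh
    have hg1 : (1 / τ) • (p k - x (k+1)) - -Vs yh = (1 / τ) • (P - dx) := by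
      rw [hP, hdx, hph]
      match_scalars <;> field_simp <;> ring
    have hg2 : (1 / τ) • (q k - y (k+1)) - A xh = (1 / τ) • (Q - dy) := by
      rw [hQ, hdy, hqh]
      match_scalars <;> field_simp <;> ring
    rw [hg1] at m1
    rw [hg2] at m2
    rw [real_inner_smul_left] at m1 m2
    have F1 : ‖dx‖ ^ 2 + τ * (γG * ‖dx‖ ^ 2) ≤ ⟪P, dx⟫ := by
      have h3 := mul_le_mul_of_nonneg_left m1 hτ0.le
      have h4 : τ * (1 / τ * ⟪P - dx, dx⟫) = ⟪P - dx, dx⟫ := by field_simp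
      rw [h4] at h3
      have h5 : ⟪P - dx, dx⟫ = ⟪P, dx⟫ - ‖dx‖ ^ 2 := by
        rw [inner_sub_left, real_inner_self_eq_norm_sq]
      rw [h5] at h3; linarith
    have F2 : ‖dy‖ ^ 2 + τ * (γFs * ‖dy‖ ^ 2) ≤ ⟪Q, dy⟫ := by
      have h3 := mul_le_mul_of_nonneg_left m2 hτ0.le
      have h4 : τ * (1 / τ * ⟪Q - dy, dy⟫) = ⟪Q - dy, dy⟫ := by field_simp
      rw [h4] at h3
      have h5 : ⟪Q - dy, dy⟫ = ⟪Q, dy⟫ - ‖dy‖ ^ 2 := by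
        rw [inner_sub_left, real_inner_self_eq_norm_sq]
      rw [h5] at h3; linarith
    -- vector identities
    have h2v : p k + (v (k+1) + τ • Vs (w (k+1))) = (2:ℝ) • x (k+1) := by
      rw [hv k]; module
    have hpk : p k = (2:ℝ) • x (k+1) - (v (k+1) + τ • Vs (w (k+1))) :=
      eq_sub_of_add_eq h2v
    have F3 : P = (2:ℝ) • dx - dv - τ • Vs dw := by
      rw [hP, hph, hdx, hdv, hdw, hpk, map_sub]; module
    have h2w : q k + (w (k+1) - τ • A (v (k+1))) = (2:ℝ) • y (k+1) := by
      rw [hw k]; module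
    have hqk : q k = (2:ℝ) • y (k+1) - (w (k+1) - τ • A (v (k+1))) :=
      eq_sub_of_add_eq h2w
    have F4 : Q = (2:ℝ) • dy - dw + τ • A dv := by
      rw [hQ, hqh, hdy, hdv, hdw, hqk, map_sub]; module
    have eP : ⟪P, dv⟫ = 2 * ⟪dx, dv⟫ - ‖dv‖ ^ 2 - τ * ⟪dw, V dv⟫ := by
      rw [F3, inner_sub_left, inner_sub_left, real_inner_smul_left,
        real_inner_smul_left, real_inner_self_eq_norm_sq, hVsdef,
        ContinuousLinearMap.adjoint_inner_left]
    have eQ : ⟪Q, dw⟫ = 2 * ⟪dy, dw⟫ - ‖dw‖ ^ 2 + τ * ⟪A dv, dw⟫ := by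
      rw [F4, inner_add_left, inner_sub_left, real_inner_smul_left,
        real_inner_smul_left, real_inner_self_eq_norm_sq]
    have hn1 : ‖dv - dx‖ ^ 2 = ‖dv‖ ^ 2 - 2 * ⟪dx, dv⟫ + ‖dx‖ ^ 2 := by
      rw [norm_sub_sq_real, real_inner_comm]
    have hn2 : ‖dw - dy‖ ^ 2 = ‖dw‖ ^ 2 - 2 * ⟪dy, dw⟫ + ‖dy‖ ^ 2 := by
      rw [norm_sub_sq_real, real_inner_comm]
    -- mismatch bound
    have hAV : ⟪A dv, dw⟫ - ⟪dw, V dv⟫ ≤ μtG * ‖dv‖ ^ 2 + μtFs * ‖dw‖ ^ 2 := by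
      have h0 : ⟪dw, V dv⟫ = ⟪V dv, dw⟫ := real_inner_comm _ _
      have h1 : ⟪A dv, dw⟫ - ⟪dw, V dv⟫ = ⟪(A - V) dv, dw⟫ := by
        rw [h0, ContinuousLinearMap.sub_apply, inner_sub_left]
      have h2 : ⟪(A - V) dv, dw⟫ ≤ ‖A - V‖ * (‖dv‖ * ‖dw‖) := by
        calc ⟪(A - V) dv, dw⟫ ≤ ‖(A - V) dv‖ * ‖dw‖ := real_inner_le_norm _ _
        _ ≤ ‖A - V‖ * (‖dv‖ * ‖dw‖) := by
            rw [← mul_assoc]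
            exact mul_le_mul_of_nonneg_right ((A - V).le_opNorm dv) (norm_nonneg _)
      have h4 := mismatch_bound ‖A - V‖ μtG μtFs ‖dv‖ ‖dw‖ (norm_nonneg _)
        hμtG hμtFs hmm (norm_nonneg _) (norm_nonneg _)
      rw [h1]
      linarith [h2, h4]
    -- splitting bounds
    have A8 : μtG * ‖dv‖ ^ 2 ≤ μG * ‖dx‖ ^ 2 + KG * ‖dv - dx‖ ^ 2 := by
      have hsG : (0:ℝ) < (μG - μtG) / μtG := div_pos (by linarith) hμtG
      have hstG : (1:ℝ) ≤ (μG - μtG) / μtG * (μtG / (μG - μtG)) := by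
        have h : (μG - μtG) / μtG * (μtG / (μG - μtG)) = 1 := by field_simp
        exact h.ge
      have hy1 := aux_young dx (dv - dx) _ _ hsG hstG
      have hcan : dx + (dv - dx) = dv := by module
      rw [hcan] at hy1
      have h := mul_le_mul_of_nonneg_left hy1 hμtG.le
      have e1 : μtG * ((1 + (μG - μtG) / μtG) * ‖dx‖ ^ 2
          + (1 + μtG / (μG - μtG)) * ‖dv - dx‖ ^ 2)
          = μG * ‖dx‖ ^ 2 + KG * ‖dv - dx‖ ^ 2 := by
        rw [hKG]; field_simp; ring
      rw [e1] at h; exact h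
    have A9 : μtFs * ‖dw‖ ^ 2 ≤ μFs * ‖dy‖ ^ 2 + KF * ‖dw - dy‖ ^ 2 := by
      have hsF : (0:ℝ) < (μFs - μtFs) / μtFs := div_pos (by linarith) hμtFs
      have hstF : (1:ℝ) ≤ (μFs - μtFs) / μtFs * (μtFs / (μFs - μtFs)) := by
        have h : (μFs - μtFs) / μtFs * (μtFs / (μFs - μtFs)) = 1 := by field_simp
        exact h.ge
      have hy1 := aux_young dy (dw - dy) _ _ hsF hstF
      have hcan : dy + (dw - dy) = dw := by module
      rw [hcan] at hy1
      have h := mul_le_mul_of_nonneg_left hy1 hμtFs.le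
      have e1 : μtFs * ((1 + (μFs - μtFs) / μtFs) * ‖dy‖ ^ 2
          + (1 + μtFs / (μFs - μtFs)) * ‖dw - dy‖ ^ 2)
          = μFs * ‖dy‖ ^ 2 + KF * ‖dw - dy‖ ^ 2 := by
        rw [hKF]; field_simp; ring
      rw [e1] at h; exact h
    -- expansion of updated iterates
    have expP : ‖p (k+1) - ph‖ ^ 2
        = ‖P‖ ^ 2 + 2 * (θ * ⟪P, dv - dx⟫) + θ ^ 2 * ‖dv - dx‖ ^ 2 := by
      have h1 : p (k+1) - ph = P + θ • (dv - dx) := by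
        rw [hp k, hP, hdv, hdx]; module
      rw [h1, norm_add_sq_real, real_inner_smul_right, norm_smul,
        Real.norm_eq_abs, mul_pow, sq_abs]
    have expQ : ‖q (k+1) - qh‖ ^ 2
        = ‖Q‖ ^ 2 + 2 * (θ * ⟪Q, dw - dy⟫) + θ ^ 2 * ‖dw - dy‖ ^ 2 := by
      have h1 : q (k+1) - qh = Q + θ • (dw - dy) := by
        rw [hq k, hQ, hdw, hdy]; module
      rw [h1, norm_add_sq_real, real_inner_smul_right, norm_smul,
        Real.norm_eq_abs, mul_pow, sq_abs]
    have iP : ⟪P, dv - dx⟫ = ⟪P, dv⟫ - ⟪P, dx⟫ := inner_sub_right _ _ _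
    have iQ : ⟪Q, dw - dy⟫ = ⟪Q, dw⟫ - ⟪Q, dy⟫ := inner_sub_right _ _ _
    -- combine
    have A10 : τ * (⟪A dv, dw⟫ - ⟪dw, V dv⟫)
        ≤ τ * (μG * ‖dx‖ ^ 2 + KG * ‖dv - dx‖ ^ 2
            + (μFs * ‖dy‖ ^ 2 + KF * ‖dw - dy‖ ^ 2)) :=
      mul_le_mul_of_nonneg_left (by linarith [hAV, A8, A9]) hτ0.le
    have S1 : ⟪P, dv⟫ - ⟪P, dx⟫ + (⟪Q, dw⟫ - ⟪Q, dy⟫)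
        ≤ -(‖dv - dx‖ ^ 2) - ‖dw - dy‖ ^ 2 - τ * (γG * ‖dx‖ ^ 2) - τ * (γFs * ‖dy‖ ^ 2)
          + τ * (μG * ‖dx‖ ^ 2 + KG * ‖dv - dx‖ ^ 2
            + (μFs * ‖dy‖ ^ 2 + KF * ‖dw - dy‖ ^ 2)) := by
      linarith [eP, eQ, F1, F2, hn1, hn2, A10]
    have S2 := mul_le_mul_of_nonneg_left S1 (by positivity : (0:ℝ) ≤ 2 * θ)
    have hn1n : (0:ℝ) ≤ ‖dv - dx‖ ^ 2 := by positivity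
    have hn2n : (0:ℝ) ≤ ‖dw - dy‖ ^ 2 := by positivity
    have haxn : (0:ℝ) ≤ ‖dx‖ ^ 2 := by positivity
    have hayn : (0:ℝ) ≤ ‖dy‖ ^ 2 := by positivity
    have C1 : θ ^ 2 * ‖dv - dx‖ ^ 2 + 2 * θ * (τ * KG) * ‖dv - dx‖ ^ 2
        ≤ 2 * θ * ‖dv - dx‖ ^ 2 := by
      have h := mul_le_mul_of_nonneg_right hB1 (mul_nonneg hθ0.le hn1n)
      linarith [h]
    have C2 : θ ^ 2 * ‖dw - dy‖ ^ 2 + 2 * θ * (τ * KF) * ‖dw - dy‖ ^ 2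
        ≤ 2 * θ * ‖dw - dy‖ ^ 2 := by
      have h := mul_le_mul_of_nonneg_right hB2 (mul_nonneg hθ0.le hn2n)
      linarith [h]
    have C3 : κ * ‖dx‖ ^ 2 ≤ 2 * θ * τ * (γG - μG) * ‖dx‖ ^ 2 := by
      have h1 : ε ≤ γG - μG := min_le_left _ _
      have h2 := mul_le_mul_of_nonneg_right
        (mul_le_mul_of_nonneg_left h1
          (by positivity : (0:ℝ) ≤ 2 * θ * τ)) haxn
      rw [hκ]
      linarith [h2]
    have C4 : κ * ‖dy‖ ^ 2 ≤ 2 * θ * τ * (γFs - μFs) * ‖dy‖ ^ 2 := by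
      have h1 : ε ≤ γFs - μFs := min_le_right _ _
      have h2 := mul_le_mul_of_nonneg_right
        (mul_le_mul_of_nonneg_left h1
          (by positivity : (0:ℝ) ≤ 2 * θ * τ)) hayn
      rw [hκ]
      linarith [h2]
    rw [expP, expQ, iP, iQ]
    linarith [S2, C1, C2, C3, C4]
  -- telescoping
  have hEn : ∀ k, (0:ℝ) ≤ ‖p k - ph‖ ^ 2 + ‖q k - qh‖ ^ 2 := fun k => by positivity
  set a2 : ℕ → ℝ := fun k => ‖x (k+1) - xh‖ ^ 2 + ‖y (k+1) - yh‖ ^ 2 with ha2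
  have ha2n : ∀ k, 0 ≤ a2 k := fun k => by positivity
  have hsum : ∀ n, ∑ j ∈ Finset.range n, κ * a2 j
      + (‖p n - ph‖ ^ 2 + ‖q n - qh‖ ^ 2) ≤ ‖p 0 - ph‖ ^ 2 + ‖q 0 - qh‖ ^ 2 := by
    intro n
    induction n with
    | zero => simp
    | succ n ih =>
      rw [Finset.sum_range_succ]
      have hk := key n
      simp only [ha2]
      linarith [hk, ih]
  have hsum2 : ∀ n, ∑ j ∈ Finset.range n, a2 j
      ≤ (‖p 0 - ph‖ ^ 2 + ‖q 0 - qh‖ ^ 2) / κ := by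
    intro n
    rw [le_div_iff₀ hκ0]
    have h1 : (∑ j ∈ Finset.range n, a2 j) * κ = ∑ j ∈ Finset.range n, κ * a2 j := by
      rw [Finset.sum_mul]; exact Finset.sum_congr rfl fun j _ => mul_comm _ _
    rw [h1]
    linarith [hsum n, hEn n]
  have hsummable : Summable a2 := summable_of_sum_range_le ha2n hsum2
  have hton : Filter.Tendsto a2 Filter.atTop (nhds 0) := hsummable.tendsto_atTop_zero
  -- convergence of x
  have htx2 : Filter.Tendsto (fun k => ‖x (k+1) - xh‖ ^ 2) Filter.atTop (nhds 0) := by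
    refine squeeze_zero (fun k => by positivity) (fun k => ?_) hton
    exact le_add_of_nonneg_right (by positivity)
  have hty2 : Filter.Tendsto (fun k => ‖y (k+1) - yh‖ ^ 2) Filter.atTop (nhds 0) := by
    refine squeeze_zero (fun k => by positivity) (fun k => ?_) hton
    exact le_add_of_nonneg_left (by positivity)
  have htx1 : Filter.Tendsto (fun k => ‖x (k+1) - xh‖) Filter.atTop (nhds 0) := by
    have h := htx2.sqrt
    rw [Real.sqrt_zero] at h
    refine h.congr fun k => ?_
    exact Real.sqrt_sq (norm_nonneg _)
  have hty1 : Filter.Tendsto (fun k => ‖y (k+1) - yh‖) Filter.atTop (nhds 0) := by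
    have h := hty2.sqrt
    rw [Real.sqrt_zero] at h
    refine h.congr fun k => ?_
    exact Real.sqrt_sq (norm_nonneg _)
  have htx : Filter.Tendsto (fun k => x (k+1)) Filter.atTop (nhds xh) := by
    rw [tendsto_iff_norm_sub_tendsto_zero]; exact htx1
  have hty : Filter.Tendsto (fun k => y (k+1)) Filter.atTop (nhds yh) := by
    rw [tendsto_iff_norm_sub_tendsto_zero]; exact hty1
  have htx0 : Filter.Tendsto x Filter.atTop (nhds xh) :=
    (Filter.tendsto_add_atTop_iff_nat 1).mp htx
  have hty0 : Filter.Tendsto y Filter.atTop (nhds yh) :=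
    (Filter.tendsto_add_atTop_iff_nat 1).mp hty
  exact (htx0.inner tendsto_const_nhds).add (hty0.inner tendsto_const_nhds)
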